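/- Let P ∈ ℂ[Z₁^{±1},…,Z_n^{±1}] be a nonzero Laurent polynomial. There exists a bound M such that for every integer matrix A with n rows and Boyd height μ(A) ≥ M, the substituted Laurent polynomial P^{(A)}(Z₁,…,Z_m) = P(∏_j Z_j^{a_{1j}}, …, ∏_j Z_j^{a_{nj}}) is not the zero Laurent polynomial. -/

import Mathlib

open MeasureTheory

noncomputable instance : MeasurableSpace Circle := borel Circle
instance : BorelSpace Circle := ⟨rfl⟩

/-- The unit torus `𝕋^n`, as the group of `n`-tuples of elements of the unit circle in `ℂ`,
under coordinatewise multiplication. -/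
abbrev Torus (n : ℕ) := Fin n → Circle

/-- The continuous homomorphism `q_A : 𝕋^m → 𝕋^n` associated to an integer matrix `A`,
given by monomial substitution: the `i`-th coordinate of the image is `∏_j z_j ^ (A i j)`. -/
noncomputable def qHom {n m : ℕ} (A : Matrix (Fin n) (Fin m) ℤ) (z : Torus m) : Torus n :=
  fun i => ∏ j, (z j) ^ (A i j)

/-- The sup-norm `‖v‖_∞` of an integer vector, as a natural number. -/
def supNorm {n : ℕ} (v : Fin n → ℤ) : ℕ := Finset.univ.sup fun i => (v i).natAbs

/-- The sup-norm `‖B‖_∞` of an integer matrix: the maximal absolute value of its entries. -/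
def matNorm {n m : ℕ} (B : Matrix (Fin n) (Fin m) ℤ) : ℕ :=
  Finset.univ.sup fun i => supNorm (B i)

/-- The Boyd height `μ(A)` of an integer matrix `A ∈ M_{n,m}(ℤ)`:
the minimum of `‖v‖_∞` over nonzero integer vectors `v` with `vᵀA = 0`,
valued in `ℝ≥0∞` (so it is `∞` when no such `v` exists). -/
noncomputable def boydHeight {n m : ℕ} (A : Matrix (Fin n) (Fin m) ℤ) : ENNReal :=
  sInf {x : ENNReal | ∃ v : Fin n → ℤ, v ≠ 0 ∧ Matrix.vecMul v A = 0 ∧ x = (supNorm v : ENNReal)}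

/-- The Boyd height `μ(r)` of an integer vector `r ∈ ℤ^n`, viewing `r` as an `n × 1` matrix. -/
noncomputable def boydHeightVec {n : ℕ} (r : Fin n → ℤ) : ENNReal :=
  boydHeight (Matrix.of fun i (_ : Fin 1) => r i)

/-- The homomorphism `q_r : 𝕋 → 𝕋^n` (here `𝕋 = 𝕋^1`) given by `z ↦ (z^{r₁}, …, z^{r_n})`. -/
noncomputable def qVec {n : ℕ} (r : Fin n → ℤ) : Torus 1 → Torus n :=
  qHom (Matrix.of fun i (_ : Fin 1) => r i)

/-- The normalized Haar (probability) measure `τ_n` on the torus `𝕋^n`. -/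
noncomputable def τ (n : ℕ) : Measure (Torus n) :=
  Measure.haarMeasure (⊤ : TopologicalSpace.PositiveCompacts (Torus n))


/-- Multivariate Laurent polynomials in `n` variables over `ℂ`,
realized as the monoid algebra of the group `ℤ^n` of exponent vectors. -/
abbrev MvLaurent (n : ℕ) := AddMonoidAlgebra ℂ (Fin n →₀ ℤ)

/-- Evaluation of a Laurent polynomial at a point of `ℂ^n` (with nonzero coordinates,
e.g. on the torus): `P(z) = ∑_d P_d ∏_i z_i ^ d_i`. -/
noncomputable def laurentEval {n : ℕ} (P : MvLaurent n) (z : Fin n → ℂ) : ℂ :=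
  ∑ d ∈ P.coeff.support, P.coeff d * ∏ i, (z i) ^ (d i)

/-- The power substitution `P^{(A)}`: the Laurent polynomial obtained from `P` by substituting
`Z_i ↦ ∏_j Z_j^{a_{ij}}`; the exponent vector `d` is sent to `d·A`. -/
noncomputable def laurentSubst {n m : ℕ} (A : Matrix (Fin n) (Fin m) ℤ) (P : MvLaurent n) :
    MvLaurent m :=
  AddMonoidAlgebra.ofCoeff (Finsupp.mapDomain (fun d : Fin n →₀ ℤ =>
    Finsupp.equivFunOnFinite.symm fun j => ∑ i, d i * A i j) P.coeff)

/-- For a nonzero Laurent polynomial `P` in `n` variables, there is a bound `M` such that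
`P^{(A)} ≠ 0` for every integer matrix `A` with `n` rows and Boyd height `μ(A) ≥ M`. -/
theorem stmt13 {n : ℕ} (P : MvLaurent n) (hP : P ≠ 0) :
    ∃ M : ℕ, ∀ (m : ℕ) (A : Matrix (Fin n) (Fin m) ℤ),
      (M : ENNReal) ≤ boydHeight A → laurentSubst A P ≠ 0 := by
  classical
  set N : ℕ := P.coeff.support.sup (fun d => supNorm (d : Fin n → ℤ)) with hN
  refine ⟨2 * N + 1, fun m A hA hzero => ?_⟩
  -- injectivity of the exponent map on the support of P
  have hinj : Set.InjOn (fun d : Fin n →₀ ℤ =>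
      Finsupp.equivFunOnFinite.symm fun j => ∑ i, d i * A i j) (P.coeff.support : Set _) := by
    intro d hd d' hd' heq
    by_contra hne
    set v : Fin n → ℤ := (d : Fin n → ℤ) - (d' : Fin n → ℤ) with hv
    have hv0 : v ≠ 0 := by
      intro h
      apply hne
      ext i
      have := congrFun h i
      simpa [hv, sub_eq_zero] using this
    have hmul : Matrix.vecMul v A = 0 := by
      funext j
      have h1 : (fun j => ∑ i, d i * A i j) = (fun j => ∑ i, d' i * A i j) := by
        have := congrArg (Finsupp.equivFunOnFinite) heq
        simpa using this
      have h2 := congrFun h1 j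
      simp only [Matrix.vecMul, dotProduct, hv, Pi.zero_apply, Pi.sub_apply]
      rw [Finset.sum_congr rfl (fun i _ => sub_mul (d i) (d' i) (A i j)),
        Finset.sum_sub_distrib, h2, sub_self]
    have hmem : ((supNorm v : ENNReal)) ∈
        {x : ENNReal | ∃ w : Fin n → ℤ, w ≠ 0 ∧ Matrix.vecMul w A = 0 ∧
          x = (supNorm w : ENNReal)} := ⟨v, hv0, hmul, rfl⟩
    have hle : boydHeight A ≤ (supNorm v : ENNReal) := sInf_le hmem
    have hbound : supNorm v ≤ 2 * N := by
      apply Finset.sup_le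
      intro i _
      have hdi : (d i).natAbs ≤ N :=
        le_trans (Finset.le_sup (f := fun i => (d i).natAbs) (Finset.mem_univ i))
          (Finset.le_sup (f := fun d : Fin n →₀ ℤ => supNorm (d : Fin n → ℤ)) hd)
      have hdi' : (d' i).natAbs ≤ N :=
        le_trans (Finset.le_sup (f := fun i => (d' i).natAbs) (Finset.mem_univ i))
          (Finset.le_sup (f := fun d : Fin n →₀ ℤ => supNorm (d : Fin n → ℤ)) hd')
      calc (v i).natAbs ≤ (d i).natAbs + (d' i).natAbs := by
            simpa [hv, sub_eq_add_neg] using Int.natAbs_add_le (d i) (-(d' i))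
        _ ≤ N + N := Nat.add_le_add hdi hdi'
        _ = 2 * N := (two_mul N).symm
    have : ((2 * N + 1 : ℕ) : ENNReal) ≤ (supNorm v : ENNReal) := le_trans hA hle
    have : (2 * N + 1) ≤ supNorm v := by exact_mod_cast this
    omega
  exact hP (AddMonoidAlgebra.coeff_eq_zero.mp (Finsupp.mapDomain_injOn _ hinj (by simp) (by simp)
    (by simpa [laurentSubst] using hzero)))
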